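/- Let f : ℝ^n → ℝ be continuously differentiable, bounded below, with L-Lipschitz gradient, and let x_{k+1} = x_k + α_k·d_k with α_k > 0 satisfying the strong Wolfe–Powell conditions with parameters 0 < δ < σ < 1, where g_k = ∇f(x_k), d_k ≠ 0 for all k, and the sufficient descent condition ⟨g_k, d_k⟩ ≤ -c‖g_k‖² holds for a constant c > 0. If there exists r > 0 with ‖g_k‖ ≥ r for all k, then ∑_{k≥0} 1/‖d_k‖² < ∞. -/

import Mathlib

open RealInnerProductSpace

/-- If the gradient norms are bounded away from zero, then ∑ 1/‖d k‖² converges. -/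
theorem gradients_bounded_away_implies_summable
    (n : ℕ) (f : EuclideanSpace ℝ (Fin n) → ℝ)
    (hf : ContDiff ℝ 1 f)
    (hbdd : BddBelow (Set.range f))
    (L : NNReal) (hL : 0 < L) (hlip : LipschitzWith L (fun x => gradient f x))
    (x d : ℕ → EuclideanSpace ℝ (Fin n)) (α : ℕ → ℝ)
    (hα : ∀ k, 0 < α k)
    (hx : ∀ k, x (k + 1) = x k + α k • d k)
    (δ σ : ℝ) (hδ : 0 < δ) (hδσ : δ < σ) (hσ : σ < 1)
    (hWolfe1 : ∀ k, f (x k + α k • d k) ≤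
      f (x k) + δ * α k * ⟪gradient f (x k), d k⟫)
    (hWolfe2 : ∀ k, |⟪gradient f (x k + α k • d k), d k⟫| ≤
      σ * |⟪gradient f (x k), d k⟫|)
    (hdne : ∀ k, d k ≠ 0)
    (c : ℝ) (hc : 0 < c)
    (hdesc : ∀ k, ⟪gradient f (x k), d k⟫ ≤ -c * ‖gradient f (x k)‖ ^ 2)
    (r : ℝ) (hr : 0 < r) (hg : ∀ k, r ≤ ‖gradient f (x k)‖) :
    Summable (fun k : ℕ => 1 / ‖d k‖ ^ 2) := by
  have hLpos : (0:ℝ) < (L:ℝ) := hL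
  obtain ⟨B, hB⟩ := hbdd
  have hdpos : ∀ k, (0:ℝ) < ‖d k‖ := fun k => norm_pos_iff.mpr (hdne k)
  have hσ0 : 0 < σ := lt_trans hδ hδσ
  set K : ℝ := δ * (1 - σ) * (c^2 * r^4) / L with hK_def
  have hKpos : 0 < K := by
    apply div_pos _ hLpos
    have : 0 < 1 - σ := by linarith
    positivity
  have key : ∀ k, K / ‖d k‖^2 ≤ f (x k) - f (x (k+1)) := by
    intro k
    set t : ℝ := ⟪gradient f (x k), d k⟫ with ht
    have htle : t ≤ -c * r^2 := by
      have h1 := hdesc k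
      have h2 := hg k
      have : c * r^2 ≤ c * ‖gradient f (x k)‖^2 := by
        apply mul_le_mul_of_nonneg_left _ hc.le
        nlinarith [hg k, hr.le]
      linarith
    have hcr : 0 < c * r^2 := mul_pos hc (pow_pos hr 2)
    have ht0 : t < 0 := lt_of_le_of_lt htle (by linarith)
    have h1σ : 0 < 1 - σ := by linarith
    have htsq : c^2 * r^4 ≤ t^2 := by
      have h5 : c * r^2 ≤ -t := by linarith
      nlinarith [mul_le_mul h5 h5 hcr.le (by linarith : (0:ℝ) ≤ -t)]
    -- Wolfe 2 implies σ t ≤ ⟪g_{k+1}, d k⟫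
    have h2 := hWolfe2 k
    have habs : |t| = -t := abs_of_neg ht0
    rw [habs] at h2
    have hge : σ * t ≤ ⟪gradient f (x k + α k • d k), d k⟫ := by
      have := (abs_le.mp h2).1
      linarith
    -- Lipschitz bound
    have hlipk : ‖gradient f (x (k+1)) - gradient f (x k)‖ ≤ (L:ℝ) * (α k * ‖d k‖) := by
      have hd := hlip.dist_le_mul (x (k+1)) (x k)
      rw [dist_eq_norm, dist_eq_norm] at hd
      have hxx : x (k+1) - x k = α k • d k := by rw [hx k]; abel
      rw [hxx, norm_smul, Real.norm_eq_abs, abs_of_pos (hα k)] at hd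
      exact hd
    have hinner : ⟪gradient f (x (k+1)) - gradient f (x k), d k⟫ ≤ (L:ℝ) * α k * ‖d k‖^2 := by
      calc ⟪gradient f (x (k+1)) - gradient f (x k), d k⟫
          ≤ ‖gradient f (x (k+1)) - gradient f (x k)‖ * ‖d k‖ := real_inner_le_norm _ _
        _ ≤ ((L:ℝ) * (α k * ‖d k‖)) * ‖d k‖ :=
            mul_le_mul_of_nonneg_right hlipk (norm_nonneg _)
        _ = (L:ℝ) * α k * ‖d k‖^2 := by ring
    have hsub : ⟪gradient f (x (k+1)) - gradient f (x k), d k⟫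
        = ⟪gradient f (x (k+1)), d k⟫ - t := by
      rw [inner_sub_left]
    have hxk : x (k+1) = x k + α k • d k := hx k
    have h3 : (σ - 1) * t ≤ (L:ℝ) * α k * ‖d k‖^2 := by
      have h4 : ⟪gradient f (x (k+1)), d k⟫ - t ≤ (L:ℝ) * α k * ‖d k‖^2 := by
        rw [← hsub]; exact hinner
      rw [hxk] at h4
      nlinarith [hge]
    have hW1 : f (x (k+1)) ≤ f (x k) + δ * α k * t := by
      rw [hxk]; exact hWolfe1 k
    -- final inequality
    rw [hK_def, div_div, div_le_iff₀ (mul_pos hLpos (pow_pos (hdpos k) 2))]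
    nlinarith [mul_le_mul_of_nonneg_left h3 (mul_pos hδ (neg_pos.mpr ht0)).le,
      mul_le_mul_of_nonneg_right hW1 (mul_pos (pow_pos (hdpos k) 2) hLpos).le,
      mul_le_mul_of_nonneg_left htsq (mul_pos hδ h1σ).le,
      sq_nonneg t, hα k, hdpos k, mul_pos (hα k) (neg_pos.mpr ht0)]
  have hnn : ∀ k, 0 ≤ K / ‖d k‖^2 := fun k => by positivity
  have hsum : Summable (fun k => K / ‖d k‖^2) := by
    apply summable_of_sum_range_le hnn (c := f (x 0) - B)
    intro N
    have h1 : ∑ i ∈ Finset.range N, (K / ‖d i‖^2)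
        ≤ ∑ i ∈ Finset.range N, (f (x i) - f (x (i+1))) :=
      Finset.sum_le_sum (fun i _ => key i)
    have htel : ∑ i ∈ Finset.range N, (f (x i) - f (x (i+1))) = f (x 0) - f (x N) := by
      have := Finset.sum_range_sub' (fun i => f (x i)) N
      simpa using this
    have hBN : B ≤ f (x N) := hB (Set.mem_range_self (x N))
    linarith
  have := hsum.div_const K
  convert this using 2 with k
  · rfl
  rw [div_right_comm, div_self hKpos.ne']
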